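/- arXiv:1812.11809 — 2 statements merged into one kernel-verified Lean document; each statement's English description precedes it below -/
import Mathlib

section
/- In the fixed-stress error framework (continuous), assume additionally that there is β_s > 0 such that for every s ∈ Q there exists w ∈ U with D w = s and ‖E w‖ ≤ β_s⁻¹ ‖s‖, and that L ≥ 1/(λ + c_K²). Set ρ² := 1/(L⁻¹/(β_s⁻² + λ) + 1). Then for every m ≥ 0: ‖E e_u^m‖² + λ ‖D e_u^m‖² ≤ (λ + c_K²)⁻¹ ρ^{2m} ‖Σᵢ e_{p,i}^0‖². -/
open scoped RealInnerProductSpace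
open scoped MatrixOrder

/-- Nonnegativity of the Gram-type quadratic form associated with a positive
semidefinite matrix and a family of Hilbert-space vectors. -/
lemma gram_psd_nonneg {Q : Type*} [NormedAddCommGroup Q] [InnerProductSpace ℝ Q]
    {n : ℕ} {M : Matrix (Fin n) (Fin n) ℝ} (hM : M.PosSemidef) (p : Fin n → Q) :
    0 ≤ ∑ i, ∑ j, M i j * ⟪p j, p i⟫ := by
  classical
  have hs : ∀ i j, CFC.sqrt M i j = CFC.sqrt M j i := by
    intro i j
    have h := (Matrix.nonneg_iff_posSemidef.mp (CFC.sqrt_nonneg M)).isHermitian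
    conv_lhs => rw [← h]
    simp [Matrix.conjTranspose_apply]
  have hk : ∀ k, ⟪∑ j, CFC.sqrt M k j • p j, ∑ i, CFC.sqrt M k i • p i⟫
      = ∑ i, ∑ j, CFC.sqrt M k j * (CFC.sqrt M k i * ⟪p j, p i⟫) := by
    intro k
    rw [inner_sum]
    refine Finset.sum_congr rfl fun i _ => ?_
    rw [sum_inner]
    refine Finset.sum_congr rfl fun j _ => ?_
    rw [real_inner_smul_left, real_inner_smul_right]
  have hstep : ∑ i, ∑ j, M i j * ⟪p j, p i⟫
      = ∑ k, ⟪∑ j, CFC.sqrt M k j • p j, ∑ i, CFC.sqrt M k i • p i⟫ := by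
    calc ∑ i, ∑ j, M i j * ⟪p j, p i⟫
        = ∑ i, ∑ j, ∑ k, CFC.sqrt M k j * (CFC.sqrt M k i * ⟪p j, p i⟫) := by
          refine Finset.sum_congr rfl fun i _ => Finset.sum_congr rfl fun j _ => ?_
          conv_lhs => rw [← CFC.sqrt_mul_sqrt_self M hM.nonneg]
          rw [Matrix.mul_apply, Finset.sum_mul]
          refine Finset.sum_congr rfl fun k _ => ?_
          rw [hs i k]; ring
      _ = ∑ i, ∑ k, ∑ j, CFC.sqrt M k j * (CFC.sqrt M k i * ⟪p j, p i⟫) :=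
          Finset.sum_congr rfl fun i _ => Finset.sum_comm
      _ = ∑ k, ∑ i, ∑ j, CFC.sqrt M k j * (CFC.sqrt M k i * ⟪p j, p i⟫) :=
          Finset.sum_comm
      _ = ∑ k, ⟪∑ j, CFC.sqrt M k j • p j, ∑ i, CFC.sqrt M k i • p i⟫ :=
          Finset.sum_congr rfl fun k _ => (hk k).symm
  rw [hstep]
  exact Finset.sum_nonneg fun k _ => real_inner_self_nonneg

private lemma aux_cs (lam b e d : ℝ) (hlam : 0 ≤ lam) :
    (b * e + lam * d) ^ 2 ≤ (b * b + lam) * (e ^ 2 + lam * d ^ 2) := by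
  nlinarith [mul_nonneg hlam (sq_nonneg (e - b * d))]

/-- Displacement estimate (error_eu) of Theorem 3: under the abstract Stokes inf-sup
condition and L ≥ 1/(λ + c_K²), with ρ² = 1/(L⁻¹/(β_s⁻² + λ) + 1), the displacement
errors satisfy ‖E e_u^m‖² + λ‖D e_u^m‖² ≤ (λ + c_K²)⁻¹ ρ^{2m} ‖Σᵢ e_{p,i}^0‖². -/
theorem fixed_stress_displacement_decay
    {U H Q : Type*}
    [NormedAddCommGroup U] [InnerProductSpace ℝ U] [CompleteSpace U]
    [NormedAddCommGroup H] [InnerProductSpace ℝ H] [CompleteSpace H]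
    [NormedAddCommGroup Q] [InnerProductSpace ℝ Q] [CompleteSpace Q]
    (n : ℕ) (hn : 1 ≤ n)
    (V : Fin n → Type*)
    [∀ i, NormedAddCommGroup (V i)] [∀ i, InnerProductSpace ℝ (V i)]
    [∀ i, CompleteSpace (V i)]
    (E : U →L[ℝ] H) (D : U →L[ℝ] Q) (Dv : ∀ i, V i →L[ℝ] Q)
    (lam L cK : ℝ) (Rinv : Fin n → ℝ)
    (hlam : 0 < lam) (hL : 0 < L) (hRinv : ∀ i, 0 < Rinv i) (hcK : 0 < cK)
    (M : Matrix (Fin n) (Fin n) ℝ) (hM : M.PosSemidef)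
    (hKorn : ∀ w : U, cK * ‖D w‖ ≤ ‖E w‖)
    (eu : ℕ → U) (ev : ℕ → ∀ i, V i) (ep : ℕ → Fin n → Q)
    (heq1 : ∀ (m : ℕ) (q : Fin n → Q),
      -(∑ i, ⟪Dv i (ev (m + 1) i), q i⟫)
          - ∑ i, ∑ j, M i j * ⟪ep (m + 1) j, q i⟫
          - L * ⟪∑ j, ep (m + 1) j, ∑ i, q i⟫
        = -(L * ⟪∑ j, ep m j, ∑ i, q i⟫) + ⟪D (eu m), ∑ i, q i⟫)
    (heq2 : ∀ (m : ℕ) (z : ∀ i, V i),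
      ∑ i, Rinv i * ⟪ev (m + 1) i, z i⟫ - ∑ i, ⟪ep (m + 1) i, Dv i (z i)⟫ = 0)
    (heq3 : ∀ (m : ℕ) (w : U),
      ⟪E (eu m), E w⟫ + lam * ⟪D (eu m), D w⟫ = ⟪∑ i, ep m i, D w⟫)
    (hLge : 1 / (lam + cK ^ 2) ≤ L)
    (βs : ℝ) (hβs : 0 < βs)
    (hinfsup : ∀ s : Q, ∃ w : U, D w = s ∧ ‖E w‖ ≤ βs⁻¹ * ‖s‖)
    (ρ2 : ℝ) (hρ2 : ρ2 = 1 / (L⁻¹ / ((βs ^ 2)⁻¹ + lam) + 1)) :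
    ∀ m : ℕ,
      ‖E (eu m)‖ ^ 2 + lam * ‖D (eu m)‖ ^ 2
        ≤ (lam + cK ^ 2)⁻¹ * ρ2 ^ m * ‖∑ i, ep 0 i‖ ^ 2 := by
  have hc : (0:ℝ) < (βs ^ 2)⁻¹ + lam := by positivity
  have hlcK : (0:ℝ) < lam + cK ^ 2 := by positivity
  have hLinv : L⁻¹ ≤ lam + cK ^ 2 := by
    rw [one_div] at hLge
    calc L⁻¹ ≤ ((lam + cK ^ 2)⁻¹)⁻¹ := by
          exact inv_anti₀ (by positivity) hLge
      _ = lam + cK ^ 2 := inv_inv _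
  set a : ℝ := L⁻¹ / ((βs ^ 2)⁻¹ + lam) with ha
  have hapos : 0 < a := by rw [ha]; positivity
  have ha1 : (0:ℝ) < a + 1 := by linarith
  have hρ2pos : 0 < ρ2 := by rw [hρ2]; positivity
  have h1ρ : 1 - ρ2 ≤ a := by
    have h1 : 1 - a ≤ 1 / (a + 1) := by
      rw [le_div_iff₀ ha1]; nlinarith [sq_nonneg a]
    rw [hρ2]; linarith
  -- energy identity
  have hXinner : ∀ m, ‖E (eu m)‖ ^ 2 + lam * ‖D (eu m)‖ ^ 2
      = ⟪∑ i, ep m i, D (eu m)⟫ := by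
    intro m
    have h := heq3 m (eu m)
    rwa [real_inner_self_eq_norm_sq, real_inner_self_eq_norm_sq] at h
  have hKorn2 : ∀ m, (lam + cK ^ 2) * ‖D (eu m)‖ ^ 2
      ≤ ‖E (eu m)‖ ^ 2 + lam * ‖D (eu m)‖ ^ 2 := by
    intro m
    have hp := mul_le_mul (hKorn (eu m)) (hKorn (eu m))
      (by positivity) (norm_nonneg (E (eu m)))
    nlinarith [hp]
  have hDle : ∀ m, (lam + cK ^ 2) * ‖D (eu m)‖ ≤ ‖∑ i, ep m i‖ := by
    intro m
    rcases (norm_nonneg (D (eu m))).eq_or_lt with h | h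
    · rw [← h, mul_zero]; exact norm_nonneg _
    · have hcs := real_inner_le_norm (∑ i, ep m i) (D (eu m))
      have h2 := hKorn2 m
      have h1 := hXinner m
      refine le_of_mul_le_mul_right ?_ h
      calc (lam + cK ^ 2) * ‖D (eu m)‖ * ‖D (eu m)‖
          = (lam + cK ^ 2) * ‖D (eu m)‖ ^ 2 := by ring
        _ ≤ ‖E (eu m)‖ ^ 2 + lam * ‖D (eu m)‖ ^ 2 := h2
        _ = ⟪∑ i, ep m i, D (eu m)⟫ := h1
        _ ≤ ‖∑ i, ep m i‖ * ‖D (eu m)‖ := hcs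
  have hX_le : ∀ m, ‖E (eu m)‖ ^ 2 + lam * ‖D (eu m)‖ ^ 2
      ≤ (lam + cK ^ 2)⁻¹ * ‖∑ i, ep m i‖ ^ 2 := by
    intro m
    rw [inv_mul_eq_div, le_div_iff₀ hlcK]
    have h1 := hXinner m
    have hcs := real_inner_le_norm (∑ i, ep m i) (D (eu m))
    have hd := hDle m
    calc (‖E (eu m)‖ ^ 2 + lam * ‖D (eu m)‖ ^ 2) * (lam + cK ^ 2)
        ≤ (‖∑ i, ep m i‖ * ‖D (eu m)‖) * (lam + cK ^ 2) := by
          refine mul_le_mul_of_nonneg_right ?_ hlcK.le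
          rw [h1]; exact hcs
      _ = ‖∑ i, ep m i‖ * ((lam + cK ^ 2) * ‖D (eu m)‖) := by ring
      _ ≤ ‖∑ i, ep m i‖ * ‖∑ i, ep m i‖ :=
          mul_le_mul_of_nonneg_left hd (norm_nonneg _)
      _ = ‖∑ i, ep m i‖ ^ 2 := (pow_two _).symm
  -- inf-sup lower bound
  have hinf : ∀ m, ‖∑ i, ep m i‖ ^ 2
      ≤ ((βs ^ 2)⁻¹ + lam) * (‖E (eu m)‖ ^ 2 + lam * ‖D (eu m)‖ ^ 2) := by
    intro m
    obtain ⟨w, hw1, hw2⟩ := hinfsup (∑ i, ep m i)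
    have h3 := heq3 m w
    rw [hw1, real_inner_self_eq_norm_sq] at h3
    have c1 := real_inner_le_norm (E (eu m)) (E w)
    have c2 := real_inner_le_norm (D (eu m)) (∑ i, ep m i)
    have hns : ‖∑ i, ep m i‖ ^ 2
        ≤ (βs⁻¹ * ‖E (eu m)‖ + lam * ‖D (eu m)‖) * ‖∑ i, ep m i‖ := by
      have hint1 := mul_le_mul_of_nonneg_left hw2 (norm_nonneg (E (eu m)))
      have hint2 := mul_le_mul_of_nonneg_left c2 hlam.le
      nlinarith [hint1, hint2, c1, h3]
    have hs1 : ‖∑ i, ep m i‖ ≤ βs⁻¹ * ‖E (eu m)‖ + lam * ‖D (eu m)‖ := by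
      rcases (norm_nonneg (∑ i, ep m i)).eq_or_lt with h | h
      · rw [← h]; positivity
      · refine le_of_mul_le_mul_right ?_ h
        calc ‖∑ i, ep m i‖ * ‖∑ i, ep m i‖ = ‖∑ i, ep m i‖ ^ 2 := (pow_two _).symm
          _ ≤ (βs⁻¹ * ‖E (eu m)‖ + lam * ‖D (eu m)‖) * ‖∑ i, ep m i‖ := hns
    have hb2 : ((βs:ℝ) ^ 2)⁻¹ = βs⁻¹ * βs⁻¹ := by rw [sq, mul_inv]
    rw [hb2]
    have hsq1 : ‖∑ i, ep m i‖ ^ 2 ≤ (βs⁻¹ * ‖E (eu m)‖ + lam * ‖D (eu m)‖) ^ 2 :=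
      pow_le_pow_left₀ (norm_nonneg _) hs1 2
    exact le_trans hsq1 (aux_cs lam βs⁻¹ ‖E (eu m)‖ ‖D (eu m)‖ hlam.le)
  -- one-step contraction
  have hstep : ∀ m, ‖∑ i, ep (m + 1) i‖ ^ 2 ≤ ρ2 * ‖∑ i, ep m i‖ ^ 2 := by
    intro m
    have hA1 := heq1 m (ep (m + 1))
    have hA2 := heq2 m (ev (m + 1))
    have hRpos : 0 ≤ ∑ i, ⟪Dv i (ev (m + 1) i), ep (m + 1) i⟫ := by
      have h3 : ∑ i, ⟪Dv i (ev (m + 1) i), ep (m + 1) i⟫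
          = ∑ i, Rinv i * ⟪ev (m + 1) i, ev (m + 1) i⟫ := by
        have h2 : ∑ i, ⟪ep (m + 1) i, Dv i (ev (m + 1) i)⟫
            = ∑ i, Rinv i * ⟪ev (m + 1) i, ev (m + 1) i⟫ := by linarith
        rw [← h2]
        exact Finset.sum_congr rfl fun i _ => real_inner_comm _ _
      rw [h3]
      exact Finset.sum_nonneg fun i _ =>
        mul_nonneg (hRinv i).le real_inner_self_nonneg
    have hQpos : 0 ≤ ∑ i, ∑ j, M i j * ⟪ep (m + 1) j, ep (m + 1) i⟫ :=
      gram_psd_nonneg hM (ep (m + 1))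
    have hmain : L * ⟪∑ j, ep (m + 1) j, ∑ i, ep (m + 1) i⟫
        ≤ L * ⟪∑ j, ep m j, ∑ i, ep (m + 1) i⟫ - ⟪D (eu m), ∑ i, ep (m + 1) i⟫ := by
      linarith
    rw [real_inner_self_eq_norm_sq] at hmain
    set t : Q := (∑ i, ep m i) - L⁻¹ • D (eu m) with ht
    have hinner_t : L * ⟪t, ∑ i, ep (m + 1) i⟫
        = L * ⟪∑ j, ep m j, ∑ i, ep (m + 1) i⟫ - ⟪D (eu m), ∑ i, ep (m + 1) i⟫ := by
      rw [ht, inner_sub_left, real_inner_smul_left]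
      field_simp
    have hmain2 : ‖∑ i, ep (m + 1) i‖ ^ 2 ≤ ⟪t, ∑ i, ep (m + 1) i⟫ := by
      rw [← hinner_t] at hmain
      exact le_of_mul_le_mul_left hmain hL
    have hcs : ⟪t, ∑ i, ep (m + 1) i⟫ ≤ ‖t‖ * ‖∑ i, ep (m + 1) i‖ :=
      real_inner_le_norm _ _
    have hle : ‖∑ i, ep (m + 1) i‖ ≤ ‖t‖ := by
      rcases (norm_nonneg (∑ i, ep (m + 1) i)).eq_or_lt with h | h
      · rw [← h]; exact norm_nonneg t
      · refine le_of_mul_le_mul_right ?_ h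
        calc ‖∑ i, ep (m + 1) i‖ * ‖∑ i, ep (m + 1) i‖
            = ‖∑ i, ep (m + 1) i‖ ^ 2 := (pow_two _).symm
          _ ≤ ⟪t, ∑ i, ep (m + 1) i⟫ := hmain2
          _ ≤ ‖t‖ * ‖∑ i, ep (m + 1) i‖ := hcs
    have hsq : ‖∑ i, ep (m + 1) i‖ ^ 2 ≤ ‖t‖ ^ 2 :=
      pow_le_pow_left₀ (norm_nonneg _) hle 2
    have htexp : ‖t‖ ^ 2 = ‖∑ i, ep m i‖ ^ 2
        - 2 * (L⁻¹ * ⟪∑ i, ep m i, D (eu m)⟫)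
        + L⁻¹ * (L⁻¹ * ‖D (eu m)‖ ^ 2) := by
      rw [ht, norm_sub_sq_real, real_inner_smul_right, norm_smul]
      rw [Real.norm_eq_abs, abs_of_pos (inv_pos.mpr hL)]
      ring
    have hX := hXinner m
    have h1 := hinf m
    have h2 := hKorn2 m
    have key2 : L⁻¹ * (L⁻¹ * ‖D (eu m)‖ ^ 2)
        ≤ L⁻¹ * (‖E (eu m)‖ ^ 2 + lam * ‖D (eu m)‖ ^ 2) := by
      have hmid : L⁻¹ * ‖D (eu m)‖ ^ 2 ≤ ‖E (eu m)‖ ^ 2 + lam * ‖D (eu m)‖ ^ 2 :=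
        le_trans (mul_le_mul_of_nonneg_right hLinv (sq_nonneg _)) h2
      exact mul_le_mul_of_nonneg_left hmid (inv_pos.mpr hL).le
    have key1 : a * ‖∑ i, ep m i‖ ^ 2
        ≤ L⁻¹ * (‖E (eu m)‖ ^ 2 + lam * ‖D (eu m)‖ ^ 2) := by
      have h := mul_le_mul_of_nonneg_left h1 hapos.le
      have heqa : a * (((βs ^ 2)⁻¹ + lam)
          * (‖E (eu m)‖ ^ 2 + lam * ‖D (eu m)‖ ^ 2))
          = L⁻¹ * (‖E (eu m)‖ ^ 2 + lam * ‖D (eu m)‖ ^ 2) := by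
        rw [ha]; field_simp
      linarith
    have hfin : (1 - ρ2) * ‖∑ i, ep m i‖ ^ 2 ≤ a * ‖∑ i, ep m i‖ ^ 2 :=
      mul_le_mul_of_nonneg_right h1ρ (sq_nonneg _)
    calc ‖∑ i, ep (m + 1) i‖ ^ 2 ≤ ‖t‖ ^ 2 := hsq
      _ ≤ ρ2 * ‖∑ i, ep m i‖ ^ 2 := by
          rw [htexp, ← hX]; linarith [key1, key2, hfin]
  -- geometric decay by induction
  have hgeo : ∀ m, ‖∑ i, ep m i‖ ^ 2 ≤ ρ2 ^ m * ‖∑ i, ep 0 i‖ ^ 2 := by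
    intro m
    induction m with
    | zero => simp
    | succ m ih =>
        calc ‖∑ i, ep (m + 1) i‖ ^ 2 ≤ ρ2 * ‖∑ i, ep m i‖ ^ 2 := hstep m
          _ ≤ ρ2 * (ρ2 ^ m * ‖∑ i, ep 0 i‖ ^ 2) :=
              mul_le_mul_of_nonneg_left ih hρ2pos.le
          _ = ρ2 ^ (m + 1) * ‖∑ i, ep 0 i‖ ^ 2 := by ring
  intro m
  calc ‖E (eu m)‖ ^ 2 + lam * ‖D (eu m)‖ ^ 2
      ≤ (lam + cK ^ 2)⁻¹ * ‖∑ i, ep m i‖ ^ 2 := hX_le m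
    _ ≤ (lam + cK ^ 2)⁻¹ * (ρ2 ^ m * ‖∑ i, ep 0 i‖ ^ 2) :=
        mul_le_mul_of_nonneg_left (hgeo m) (inv_pos.mpr hlcK).le
    _ = (lam + cK ^ 2)⁻¹ * ρ2 ^ m * ‖∑ i, ep 0 i‖ ^ 2 := by ring
end

section
/- In the fixed-stress error framework (bilinear-form version), assume additionally that there is β_{sd} > 0 such that for every s ∈ Q there exists w ∈ U with D w = s and a(w, w) ≤ β_{sd}⁻² ‖s‖², and that L ≥ 1/(λ + c_{K_d}²). Then for every m ≥ 0: (L⁻¹/(β_{sd}⁻² + λ) + 1) ‖Σᵢ e_{p,i}^{m+1}‖² ≤ ‖Σᵢ e_{p,i}^m‖². In particular ‖Σᵢ e_{p,i}^{m+1}‖² ≤ rate_d² ‖Σᵢ e_{p,i}^m‖² with rate_d² = 1/(L⁻¹/(β_{sd}⁻² + λ) + 1) < 1. -/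
open scoped RealInnerProductSpace

lemma bilin_cs {E : Type*} [AddCommGroup E] [Module ℝ E] (b : E → E → ℝ)
    (h1 : ∀ x y z : E, b (x + y) z = b x z + b y z)
    (h2 : ∀ (t : ℝ) (x y : E), b (t • x) y = t * b x y)
    (hsymm : ∀ x y : E, b x y = b y x)
    (hpos : ∀ x : E, 0 ≤ b x x) (x y : E) :
    b x y ^ 2 ≤ b x x * b y y := by
  have h1' : ∀ x y z : E, b z (x + y) = b z x + b z y := fun p q r => by
    rw [hsymm, h1, hsymm p, hsymm q]
  have h2' : ∀ (t : ℝ) (x y : E), b x (t • y) = t * b x y := fun t p q => by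
    rw [hsymm, h2, hsymm]
  have key : ∀ t : ℝ, 0 ≤ b y y * (t * t) + (2 * b x y) * t + b x x := by
    intro t
    have h := hpos (x + t • y)
    simp only [h1, h1', h2, h2'] at h
    rw [hsymm y x] at h
    nlinarith [h]
  have hd := discrim_le_zero key
  rw [discrim] at hd
  nlinarith [hd]

lemma gram_psd {Q : Type*} [NormedAddCommGroup Q] [InnerProductSpace ℝ Q] {n : ℕ}
    (M : Matrix (Fin n) (Fin n) ℝ) (hM : M.PosSemidef) (p : Fin n → Q) :
    0 ≤ ∑ i, ∑ j, M i j * ⟪p j, p i⟫ := by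
  open scoped MatrixOrder Matrix.Norms.L2Operator in
  obtain ⟨B, hB⟩ := CStarAlgebra.nonneg_iff_eq_star_mul_self.mp hM.nonneg
  have hinner : ∀ k, ⟪∑ j, B k j • p j, ∑ i, B k i • p i⟫
      = ∑ i, ∑ j, B k i * B k j * ⟪p j, p i⟫ := by
    intro k
    rw [inner_sum]
    refine Finset.sum_congr rfl fun i _ => ?_
    rw [real_inner_smul_right, sum_inner, Finset.mul_sum]
    refine Finset.sum_congr rfl fun j _ => ?_
    rw [real_inner_smul_left]
    ring
  have step1 : ∑ i, ∑ j, M i j * ⟪p j, p i⟫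
      = ∑ i, ∑ j, ∑ k, B k i * B k j * ⟪p j, p i⟫ := by
    refine Finset.sum_congr rfl fun i _ => Finset.sum_congr rfl fun j _ => ?_
    rw [hB, Matrix.mul_apply, Finset.sum_mul]
    refine Finset.sum_congr rfl fun k _ => ?_
    simp [Matrix.conjTranspose_apply]
  have step2 : ∑ i, ∑ j, ∑ k, B k i * B k j * ⟪p j, p i⟫
      = ∑ k, ∑ i, ∑ j, B k i * B k j * ⟪p j, p i⟫ := by
    calc ∑ i, ∑ j, ∑ k, B k i * B k j * ⟪p j, p i⟫
        = ∑ i, ∑ k, ∑ j, B k i * B k j * ⟪p j, p i⟫ :=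
          Finset.sum_congr rfl fun i _ => Finset.sum_comm
      _ = ∑ k, ∑ i, ∑ j, B k i * B k j * ⟪p j, p i⟫ := Finset.sum_comm
  rw [step1, step2, Finset.sum_congr rfl fun k _ => (hinner k).symm]
  exact Finset.sum_nonneg fun k _ => real_inner_self_nonneg

lemma scalar_final {X Y K c L e : ℝ} (hL : 0 < L) (hc : 0 < c) (he : 0 < e)
    (hK : 0 ≤ K) (hrel : e * (L * c) = 1)
    (h5 : L ^ 2 * X ≤ L ^ 2 * Y - L * K) (h8 : Y ≤ K * c) :
    (e + 1) * X ≤ Y := by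
  have h1 : (e + 1) * (L ^ 2 * X) ≤ (e + 1) * (L ^ 2 * Y - L * K) :=
    mul_le_mul_of_nonneg_left h5 (by positivity)
  have h2 : e * L ^ 2 * Y ≤ e * L ^ 2 * (K * c) :=
    mul_le_mul_of_nonneg_left h8 (by positivity)
  have h3 : e * L ^ 2 * (K * c) = L * K := by linear_combination (L * K) * hrel
  have h4 : 0 ≤ e * (L * K) := by positivity
  nlinarith [h1, h2, h3, h4, mul_pos hL hL]

set_option maxHeartbeats 1600000 in
/-- Theorem 4 ((error_sum_p:dis)–(rate_gen:dis)) of the paper: under the abstract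
discrete Stokes inf-sup condition with constant β_{sd} and L ≥ 1/(λ + c_{K_d}²), the
discrete fixed-stress iteration contracts:
(L⁻¹/(β_{sd}⁻² + λ) + 1)‖Σᵢ e_{p,i}^{m+1}‖² ≤ ‖Σᵢ e_{p,i}^m‖², and in particular
‖Σᵢ e_{p,i}^{m+1}‖² ≤ rate_d²‖Σᵢ e_{p,i}^m‖² with
rate_d² = 1/(L⁻¹/(β_{sd}⁻² + λ) + 1) < 1. -/
theorem fixed_stress_contraction_discrete
    {U Q : Type*}
    [NormedAddCommGroup U] [InnerProductSpace ℝ U] [CompleteSpace U]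
    [NormedAddCommGroup Q] [InnerProductSpace ℝ Q] [CompleteSpace Q]
    (n : ℕ) (hn : 1 ≤ n)
    (V : Fin n → Type*)
    [∀ i, NormedAddCommGroup (V i)] [∀ i, InnerProductSpace ℝ (V i)]
    [∀ i, CompleteSpace (V i)]
    (a : U →ₗ[ℝ] U →ₗ[ℝ] ℝ)
    (hasymm : ∀ u w : U, a u w = a w u) (hapsd : ∀ u : U, 0 ≤ a u u)
    (D : U →L[ℝ] Q) (Dv : ∀ i, V i →L[ℝ] Q)
    (lam L cKd : ℝ) (Rinv : Fin n → ℝ)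
    (hlam : 0 < lam) (hL : 0 < L) (hRinv : ∀ i, 0 < Rinv i) (hcKd : 0 < cKd)
    (M : Matrix (Fin n) (Fin n) ℝ) (hM : M.PosSemidef)
    (hKorn : ∀ w : U, cKd ^ 2 * ‖D w‖ ^ 2 ≤ a w w)
    (eu : ℕ → U) (ev : ℕ → ∀ i, V i) (ep : ℕ → Fin n → Q)
    (heq1 : ∀ (m : ℕ) (q : Fin n → Q),
      -(∑ i, ⟪Dv i (ev (m + 1) i), q i⟫)
          - ∑ i, ∑ j, M i j * ⟪ep (m + 1) j, q i⟫
          - L * ⟪∑ j, ep (m + 1) j, ∑ i, q i⟫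
        = -(L * ⟪∑ j, ep m j, ∑ i, q i⟫) + ⟪D (eu m), ∑ i, q i⟫)
    (heq2 : ∀ (m : ℕ) (z : ∀ i, V i),
      ∑ i, Rinv i * ⟪ev (m + 1) i, z i⟫ - ∑ i, ⟪ep (m + 1) i, Dv i (z i)⟫ = 0)
    (heq3 : ∀ (m : ℕ) (w : U),
      a (eu m) w + lam * ⟪D (eu m), D w⟫ = ⟪∑ i, ep m i, D w⟫)
    (hLge : 1 / (lam + cKd ^ 2) ≤ L)
    (βsd : ℝ) (hβsd : 0 < βsd)
    (hinfsup : ∀ s : Q, ∃ w : U, D w = s ∧ a w w ≤ (βsd ^ 2)⁻¹ * ‖s‖ ^ 2) :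
    (∀ m : ℕ,
      (L⁻¹ / ((βsd ^ 2)⁻¹ + lam) + 1) * ‖∑ i, ep (m + 1) i‖ ^ 2 ≤ ‖∑ i, ep m i‖ ^ 2) ∧
    (∀ m : ℕ,
      ‖∑ i, ep (m + 1) i‖ ^ 2
        ≤ (1 / (L⁻¹ / ((βsd ^ 2)⁻¹ + lam) + 1)) * ‖∑ i, ep m i‖ ^ 2) ∧
    1 / (L⁻¹ / ((βsd ^ 2)⁻¹ + lam) + 1) < 1 := by
  have hc : 0 < (βsd ^ 2)⁻¹ + lam := by positivity
  set ε := L⁻¹ / ((βsd ^ 2)⁻¹ + lam) with hεdef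
  have hε : 0 < ε := div_pos (inv_pos.mpr hL) hc
  have hεLc : ε * (L * ((βsd ^ 2)⁻¹ + lam)) = 1 := by
    rw [hεdef]
    field_simp
  -- Cauchy–Schwarz for the bilinear form b(u,w) = a u w + lam⟪Du, Dw⟫
  have hcs : ∀ p q : U, (a p q + lam * ⟪D p, D q⟫) ^ 2
      ≤ (a p p + lam * ⟪D p, D p⟫) * (a q q + lam * ⟪D q, D q⟫) := by
    intro p q
    exact bilin_cs (fun u w => a u w + lam * ⟪D u, D w⟫)
      (fun x y z => by simp only [map_add, LinearMap.add_apply, inner_add_left]; ring)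
      (fun t x y => by
        simp only [map_smul, LinearMap.smul_apply, real_inner_smul_left, smul_eq_mul]; ring)
      (fun x y => by
        show a x y + lam * ⟪D x, D y⟫ = a y x + lam * ⟪D y, D x⟫
        rw [hasymm, real_inner_comm])
      (fun x => add_nonneg (hapsd x) (mul_nonneg hlam.le real_inner_self_nonneg)) p q
  have key : ∀ m : ℕ, (ε + 1) * ‖∑ i, ep (m + 1) i‖ ^ 2 ≤ ‖∑ i, ep m i‖ ^ 2 := by
    intro m
    -- energy identity for eu m
    have hS2 : a (eu m) (eu m) + lam * ‖D (eu m)‖ ^ 2 = ⟪∑ i, ep m i, D (eu m)⟫ := by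
      have h := heq3 m (eu m)
      rwa [real_inner_self_eq_norm_sq] at h
    have hK0 : 0 ≤ ⟪∑ i, ep m i, D (eu m)⟫ := by
      rw [← hS2]
      exact add_nonneg (hapsd _) (by positivity)
    have hpcl : 0 < lam + cKd ^ 2 := by positivity
    have hL1 : 1 ≤ L * (lam + cKd ^ 2) := (div_le_iff₀ hpcl).mp hLge
    have htL : ‖D (eu m)‖ ^ 2 ≤ L * ⟪∑ i, ep m i, D (eu m)⟫ := by
      have hKorn' := hKorn (eu m)
      nlinarith [mul_le_mul_of_nonneg_left hL1 hK0]
    -- inf-sup lower bound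
    have hinf : (‖∑ i, ep m i‖ ^ 2) ^ 2
        ≤ ⟪∑ i, ep m i, D (eu m)⟫ * (((βsd ^ 2)⁻¹ + lam) * ‖∑ i, ep m i‖ ^ 2) := by
      obtain ⟨w, hw1, hw2⟩ := hinfsup (∑ i, ep m i)
      have h := hcs (eu m) w
      rw [heq3 m w, hw1] at h
      rw [real_inner_self_eq_norm_sq] at h
      rw [real_inner_self_eq_norm_sq] at h
      rw [hS2] at h
      calc (‖∑ i, ep m i‖ ^ 2) ^ 2
          ≤ ⟪∑ i, ep m i, D (eu m)⟫ * (a w w + lam * ‖∑ i, ep m i‖ ^ 2) := h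
        _ ≤ ⟪∑ i, ep m i, D (eu m)⟫ * (((βsd ^ 2)⁻¹ + lam) * ‖∑ i, ep m i‖ ^ 2) :=
            mul_le_mul_of_nonneg_left (by nlinarith [hw2]) hK0
    -- the tested first error equation
    have h1 := heq1 m (ep (m + 1))
    have hA : 0 ≤ ∑ i, ⟪Dv i (ev (m + 1) i), ep (m + 1) i⟫ := by
      have h2 := heq2 m (ev (m + 1))
      have hsum : ∑ i, ⟪Dv i (ev (m + 1) i), ep (m + 1) i⟫
          = ∑ i, ⟪ep (m + 1) i, Dv i (ev (m + 1) i)⟫ :=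
        Finset.sum_congr rfl fun i _ => real_inner_comm _ _
      rw [hsum, show ∑ i, ⟪ep (m + 1) i, Dv i (ev (m + 1) i)⟫
          = ∑ i, Rinv i * ⟪ev (m + 1) i, ev (m + 1) i⟫ from by linarith [h2]]
      exact Finset.sum_nonneg fun i _ => mul_nonneg (hRinv i).le real_inner_self_nonneg
    have hB := gram_psd M hM (ep (m + 1))
    have hxx : ⟪∑ j, ep (m + 1) j, ∑ i, ep (m + 1) i⟫ = ‖∑ i, ep (m + 1) i‖ ^ 2 :=
      real_inner_self_eq_norm_sq _
    rw [hxx] at h1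
    have hS1 : L * ‖∑ i, ep (m + 1) i‖ ^ 2
        ≤ L * ⟪∑ i, ep m i, ∑ i, ep (m + 1) i⟫ - ⟪D (eu m), ∑ i, ep (m + 1) i⟫ := by
      linarith [h1, hA, hB]
    -- Cauchy–Schwarz in Q
    have hid : L * ⟪∑ i, ep m i, ∑ i, ep (m + 1) i⟫ - ⟪D (eu m), ∑ i, ep (m + 1) i⟫
        = ⟪L • (∑ i, ep m i) - D (eu m), ∑ i, ep (m + 1) i⟫ := by
      rw [inner_sub_left, real_inner_smul_left]
    have hCS : L * ‖∑ i, ep (m + 1) i‖ ^ 2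
        ≤ ‖L • (∑ i, ep m i) - D (eu m)‖ * ‖∑ i, ep (m + 1) i‖ := by
      calc L * ‖∑ i, ep (m + 1) i‖ ^ 2
          ≤ L * ⟪∑ i, ep m i, ∑ i, ep (m + 1) i⟫ - ⟪D (eu m), ∑ i, ep (m + 1) i⟫ := hS1
        _ = ⟪L • (∑ i, ep m i) - D (eu m), ∑ i, ep (m + 1) i⟫ := hid
        _ ≤ ‖L • (∑ i, ep m i) - D (eu m)‖ * ‖∑ i, ep (m + 1) i‖ := real_inner_le_norm _ _
    have hnorm : ‖L • (∑ i, ep m i) - D (eu m)‖ ^ 2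
        = L ^ 2 * ‖∑ i, ep m i‖ ^ 2 - 2 * L * ⟪∑ i, ep m i, D (eu m)⟫ + ‖D (eu m)‖ ^ 2 := by
      rw [← real_inner_self_eq_norm_sq]
      simp only [inner_sub_left, inner_sub_right, real_inner_smul_left, real_inner_smul_right]
      rw [real_inner_comm (D (eu m)) (∑ i, ep m i), real_inner_self_eq_norm_sq,
        real_inner_self_eq_norm_sq]
      ring
    by_cases hy0 : ‖∑ i, ep m i‖ = 0
    · -- degenerate case: P^m = 0
      have hy : (∑ i, ep m i) = 0 := norm_eq_zero.mp hy0
      have hK0' : ⟪∑ i, ep m i, D (eu m)⟫ = 0 := by rw [hy]; simp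
      have ht0 : ‖D (eu m)‖ ^ 2 ≤ 0 := by
        have h := htL
        rw [hK0', mul_zero] at h
        exact h
      have htz : D (eu m) = 0 := by
        have : ‖D (eu m)‖ = 0 := by nlinarith [norm_nonneg (D (eu m))]
        exact norm_eq_zero.mp this
      rw [hy, htz] at hS1
      simp only [inner_zero_left, mul_zero, sub_zero, zero_sub] at hS1
      have hx2 : ‖∑ i, ep (m + 1) i‖ ^ 2 ≤ 0 := by nlinarith [hS1, hL]
      have hx2' : ‖∑ i, ep (m + 1) i‖ ^ 2 = 0 :=
        le_antisymm hx2 (by positivity)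
      rw [hx2', hy0, mul_zero]
      positivity
    · have hy2 : 0 < ‖∑ i, ep m i‖ ^ 2 :=
        pow_pos ((norm_nonneg _).lt_of_ne (Ne.symm hy0)) 2
      have hKc : ‖∑ i, ep m i‖ ^ 2
          ≤ ⟪∑ i, ep m i, D (eu m)⟫ * ((βsd ^ 2)⁻¹ + lam) := by
        nlinarith [hinf, hy2]
      by_cases hx0 : ‖∑ i, ep (m + 1) i‖ = 0
      · rw [hx0]
        simp only [ne_eq, OfNat.ofNat_ne_zero, not_false_eq_true, zero_pow, mul_zero]
        positivity
      · have hx2 : 0 < ‖∑ i, ep (m + 1) i‖ ^ 2 :=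
          pow_pos ((norm_nonneg _).lt_of_ne (Ne.symm hx0)) 2
        have hsq : (L * ‖∑ i, ep (m + 1) i‖ ^ 2) ^ 2
            ≤ (‖L • (∑ i, ep m i) - D (eu m)‖ * ‖∑ i, ep (m + 1) i‖) ^ 2 :=
          pow_le_pow_left₀ (by positivity) hCS 2
        have hexp : (‖L • (∑ i, ep m i) - D (eu m)‖ * ‖∑ i, ep (m + 1) i‖) ^ 2
            = ‖L • (∑ i, ep m i) - D (eu m)‖ ^ 2 * ‖∑ i, ep (m + 1) i‖ ^ 2 := by ring
        rw [hexp, hnorm] at hsq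
        have h6 : (L ^ 2 * ‖∑ i, ep (m + 1) i‖ ^ 2) * ‖∑ i, ep (m + 1) i‖ ^ 2
            ≤ (L ^ 2 * ‖∑ i, ep m i‖ ^ 2 - L * ⟪∑ i, ep m i, D (eu m)⟫)
              * ‖∑ i, ep (m + 1) i‖ ^ 2 := by
          nlinarith [hsq, mul_le_mul_of_nonneg_right htL hx2.le]
        have h5 : L ^ 2 * ‖∑ i, ep (m + 1) i‖ ^ 2
            ≤ L ^ 2 * ‖∑ i, ep m i‖ ^ 2 - L * ⟪∑ i, ep m i, D (eu m)⟫ :=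
          le_of_mul_le_mul_right h6 hx2
        exact scalar_final hL hc hε hK0 hεLc h5 hKc
  refine ⟨key, fun m => ?_, ?_⟩
  · have hε1 : 0 < ε + 1 := by linarith
    rw [one_div, inv_mul_eq_div, le_div_iff₀ hε1]
    linarith [key m]
  · have hε1 : 0 < ε + 1 := by linarith
    rw [div_lt_one hε1]
    linarith
end
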